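/- Let d ≥ 1 and fix real constants c_j = d − j + 1 > 0 for j = 1,…,d. Then the function F(μ) = Σ_{j=1}^{d} log Γ(c_j + μ_j), defined on decreasing nonnegative real d-tuples μ₁ ≥ μ₂ ≥ … ≥ μ_d ≥ 0, is Schur-convex: if μ is majorized by μ′ (both decreasing with equal total sum), then F(μ) ≤ F(μ′). -/

import Mathlib

open Finset

private lemma lg_diff {x : ℝ} (hx : 0 < x) :
    DifferentiableAt ℝ (Real.log ∘ Real.Gamma) x := by
  have h := Real.differentiableAt_Gamma
    (fun m => ((neg_nonpos.mpr (Nat.cast_nonneg m)).trans_lt hx).ne')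
  simpa [Function.comp_def] using h.log (Real.Gamma_pos_of_pos hx).ne'

private lemma lg_tangent {x y : ℝ} (hx : 0 < x) (hy : 0 < y) :
    deriv (Real.log ∘ Real.Gamma) x * (y - x) ≤
      (Real.log ∘ Real.Gamma) y - (Real.log ∘ Real.Gamma) x := by
  set g := Real.log ∘ Real.Gamma
  rcases lt_trichotomy x y with h | h | h
  · have := Real.convexOn_log_Gamma.deriv_le_slope (Set.mem_Ioi.mpr hx)
      (Set.mem_Ioi.mpr hy) h (lg_diff hx)
    rw [slope_def_field, le_div_iff₀ (by linarith)] at this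
    linarith
  · simp [h]
  · have := Real.convexOn_log_Gamma.slope_le_deriv (Set.mem_Ioi.mpr hy)
      (Set.mem_Ioi.mpr hx) h (lg_diff hx)
    rw [slope_def_field, div_le_iff₀ (by linarith)] at this
    nlinarith

private lemma lg_deriv_mono : MonotoneOn (deriv (Real.log ∘ Real.Gamma)) (Set.Ioi 0) :=
  Real.convexOn_log_Gamma.monotoneOn_deriv (fun _ hx => lg_diff hx)

/-- `F(μ) = Σ_{j=1}^{d} log Γ(c_j + μ_j)` with `c_j = d − j + 1`. -/
noncomputable def F (d : ℕ) (μ : Fin d → ℝ) : ℝ :=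
  ∑ i : Fin d, Real.log (Real.Gamma ((d : ℝ) - i + μ i))

theorem stmt_17 (d : ℕ) (hd : 1 ≤ d) (μ μ' : Fin d → ℝ)
    (hμmono : ∀ i j : Fin d, i ≤ j → μ j ≤ μ i)
    (hμ'mono : ∀ i j : Fin d, i ≤ j → μ' j ≤ μ' i)
    (hμpos : ∀ i, 0 ≤ μ i) (hμ'pos : ∀ i, 0 ≤ μ' i)
    (hsum : ∑ i, μ i = ∑ i, μ' i)
    (hmaj : ∀ k : ℕ, ∑ i ∈ Finset.univ.filter (fun i : Fin d => (i : ℕ) < k), μ i ≤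
      ∑ i ∈ Finset.univ.filter (fun i : Fin d => (i : ℕ) < k), μ' i) :
    F d μ ≤ F d μ' := by
  classical
  set g := Real.log ∘ Real.Gamma with hg
  set ν : ℕ → ℝ := fun j => if h : j < d then (d : ℝ) - j + μ ⟨j, h⟩ else 1 with hνdef
  set ν' : ℕ → ℝ := fun j => if h : j < d then (d : ℝ) - j + μ' ⟨j, h⟩ else 1 with hν'def
  set t : ℕ → ℝ := fun j => ν' j - ν j with htdef
  set m : ℕ → ℝ := fun j => deriv g (ν j) with hmdef
  -- rewrite F as a range-sum
  have hF : ∀ σ : Fin d → ℝ,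
      F d σ = ∑ j ∈ range d, g (if h : j < d then (d : ℝ) - j + σ ⟨j, h⟩ else 1) := by
    intro σ
    rw [F, ← Fin.sum_univ_eq_sum_range
      (fun j => g (if h : j < d then (d : ℝ) - j + σ ⟨j, h⟩ else 1)) d]
    exact Finset.sum_congr rfl fun i _ => by simp [g, i.isLt, Function.comp]
  -- positivity of ν, ν'
  have hνpos : ∀ j, j < d → 0 < ν j := by
    intro j hj
    have h1 : (j : ℝ) + 1 ≤ d := by exact_mod_cast hj
    have := hμpos ⟨j, hj⟩
    simp only [hνdef, dif_pos hj]
    linarith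
  have hν'pos : ∀ j, j < d → 0 < ν' j := by
    intro j hj
    have h1 : (j : ℝ) + 1 ≤ d := by exact_mod_cast hj
    have := hμ'pos ⟨j, hj⟩
    simp only [hν'def, dif_pos hj]
    linarith
  -- ν is antitone on [0, d)
  have hνa : ∀ j k : ℕ, j ≤ k → k < d → ν k ≤ ν j := by
    intro j k hjk hk
    have hj : j < d := lt_of_le_of_lt hjk hk
    have h1 := hμmono ⟨j, hj⟩ ⟨k, hk⟩ hjk
    have h2 : (j : ℝ) ≤ k := by exact_mod_cast hjk
    simp only [hνdef, dif_pos hj, dif_pos hk]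
    linarith
  -- filter-sum = range-sum
  have hfilt : ∀ (σ : Fin d → ℝ) (k : ℕ), k ≤ d →
      ∑ i ∈ Finset.univ.filter (fun i : Fin d => (i : ℕ) < k), σ i =
        ∑ j ∈ range k, (if h : j < d then σ ⟨j, h⟩ else 0) := by
    intro σ k hk
    calc ∑ i ∈ Finset.univ.filter (fun i : Fin d => (i : ℕ) < k), σ i
        = ∑ i : Fin d,
            (fun j : ℕ => if j < k then (if h : j < d then σ ⟨j, h⟩ else 0) else 0) (i : ℕ) := by
          rw [Finset.sum_filter]
          exact Finset.sum_congr rfl fun i _ => by simp [i.isLt]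
      _ = ∑ j ∈ range d, (if j < k then (if h : j < d then σ ⟨j, h⟩ else 0) else 0) :=
          Fin.sum_univ_eq_sum_range (fun j => if j < k then (if h : j < d then σ ⟨j, h⟩ else 0) else 0) d
      _ = ∑ j ∈ range k, (if h : j < d then σ ⟨j, h⟩ else 0) := by
          rw [← Finset.sum_filter]
          congr 1
          ext j
          simp only [mem_filter, mem_range]
          omega
  -- partial sums of t
  have ht_eq : ∀ j, j < d →
      t j = (if h : j < d then μ' ⟨j, h⟩ else 0) - (if h : j < d then μ ⟨j, h⟩ else 0) := by
    intro j hj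
    simp only [htdef, hνdef, hν'def, dif_pos hj]
    ring
  have hSsum : ∀ k, k ≤ d → ∑ j ∈ range k, t j =
      (∑ i ∈ Finset.univ.filter (fun i : Fin d => (i : ℕ) < k), μ' i) -
      (∑ i ∈ Finset.univ.filter (fun i : Fin d => (i : ℕ) < k), μ i) := by
    intro k hk
    rw [hfilt μ' k hk, hfilt μ k hk, ← Finset.sum_sub_distrib]
    exact Finset.sum_congr rfl fun j hj => ht_eq j (lt_of_lt_of_le (mem_range.mp hj) hk)
  have hSge : ∀ k, k ≤ d → 0 ≤ ∑ j ∈ range k, t j := by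
    intro k hk
    rw [hSsum k hk]
    exact sub_nonneg.mpr (hmaj k)
  have hSd : ∑ j ∈ range d, t j = 0 := by
    rw [hSsum d le_rfl]
    have huniv : Finset.univ.filter (fun i : Fin d => (i : ℕ) < d) = Finset.univ :=
      Finset.filter_true_of_mem (fun i _ => i.isLt)
    rw [huniv, sub_eq_zero]
    exact hsum.symm
  -- tangent line inequality
  have step1 : ∀ j ∈ range d, m j * t j ≤ g (ν' j) - g (ν j) := by
    intro j hj
    exact lg_tangent (hνpos j (mem_range.mp hj)) (hν'pos j (mem_range.mp hj))
  -- antitonicity of m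
  have hm_anti : ∀ i, i + 1 < d → m (i + 1) ≤ m i := by
    intro i hi
    exact lg_deriv_mono (Set.mem_Ioi.mpr (hνpos _ hi)) (Set.mem_Ioi.mpr (hνpos _ (by omega)))
      (hνa i (i + 1) (by omega) hi)
  -- Abel summation
  have habel := Finset.sum_range_by_parts m t d
  have hmain : 0 ≤ ∑ j ∈ range d, m j * t j := by
    have : ∑ j ∈ range d, m j • t j = m (d - 1) • (∑ j ∈ range d, t j) -
        ∑ i ∈ range (d - 1), (m (i + 1) - m i) • ∑ j ∈ range (i + 1), t j := habel
    simp only [smul_eq_mul] at this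
    rw [this, hSd, mul_zero, zero_sub, neg_nonneg]
    apply Finset.sum_nonpos
    intro i hi
    have hi' : i < d - 1 := mem_range.mp hi
    have h1 : m (i + 1) - m i ≤ 0 := sub_nonpos.mpr (hm_anti i (by omega))
    have h2 : 0 ≤ ∑ j ∈ range (i + 1), t j := hSge (i + 1) (by omega)
    exact mul_nonpos_of_nonpos_of_nonneg h1 h2
  -- conclude
  rw [hF μ, hF μ', ← sub_nonneg, ← Finset.sum_sub_distrib]
  calc (0 : ℝ) ≤ ∑ j ∈ range d, m j * t j := hmain
    _ ≤ ∑ j ∈ range d, (g (ν' j) - g (ν j)) := Finset.sum_le_sum step1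
    _ = ∑ j ∈ range d, (g (if h : j < d then (d : ℝ) - j + μ' ⟨j, h⟩ else 1) -
          g (if h : j < d then (d : ℝ) - j + μ ⟨j, h⟩ else 1)) := rfl
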